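/- The reparameterized gradient flow is parameterized by level sets: let F be a real Hilbert space, let f : F → ℝ, let c ≤ d be real numbers, and let γ : ℝ → F be a curve such that for every s ∈ Icc c d, f is differentiable at γ s, gradient f (γ s) ≠ 0, and γ satisfies HasDerivWithinAt γ ((‖gradient f (γ s)‖^2)⁻¹ • gradient f (γ s)) (Icc c d) s. If f (γ c) = c, then f (γ s) = s for every s ∈ Icc c d. (This is the assertion that a curve satisfying the differential equation dγ/ds = ∇f(γ(s))/‖∇f(γ(s))‖² with the boundary condition at the bottom level is parameterized so that f ∘ γ is the identity on [f(b), f(a)].) -/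

import Mathlib

/-- The reparameterized gradient flow is parameterized by level sets: if `γ` satisfies
`dγ/ds = ∇f(γ(s))/‖∇f(γ(s))‖²` on `[c,d]` (with `f` differentiable and `∇f ≠ 0` along
`γ` there), and `f (γ c) = c`, then `f (γ s) = s` for every `s ∈ [c,d]`. -/
theorem stmt11 {F : Type*} [NormedAddCommGroup F] [InnerProductSpace ℝ F]
    [CompleteSpace F] (f : F → ℝ) (c d : ℝ) (hcd : c ≤ d) (γ : ℝ → F)
    (hf : ∀ s ∈ Set.Icc c d, DifferentiableAt ℝ f (γ s))
    (hne : ∀ s ∈ Set.Icc c d, gradient f (γ s) ≠ 0)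
    (hγ : ∀ s ∈ Set.Icc c d, HasDerivWithinAt γ
      ((‖gradient f (γ s)‖ ^ 2)⁻¹ • gradient f (γ s)) (Set.Icc c d) s)
    (hc : f (γ c) = c) :
    ∀ s ∈ Set.Icc c d, f (γ s) = s := by
  -- the composed function f ∘ γ has derivative 1 within Icc c d
  have key : ∀ s ∈ Set.Icc c d,
      HasDerivWithinAt (fun t => f (γ t) - t) 0 (Set.Icc c d) s := by
    intro s hs
    have hgrad := (hf s hs).hasGradientAt
    have hcomp := hgrad.hasFDerivAt.comp_hasDerivWithinAt s (hγ s hs)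
    have hval : (InnerProductSpace.toDual ℝ F (gradient f (γ s)))
        ((‖gradient f (γ s)‖ ^ 2)⁻¹ • gradient f (γ s)) = 1 := by
      simp only [InnerProductSpace.toDual_apply_apply, real_inner_smul_right,
        real_inner_self_eq_norm_sq]
      field_simp [hne s hs]
    rw [hval] at hcomp
    have h2 : HasDerivWithinAt (fun t => f (γ t) - t) (1 - 1) (Set.Icc c d) s :=
      hcomp.sub (hasDerivWithinAt_id s (Set.Icc c d))
    simpa using h2
  have hcont : ContinuousOn (fun t => f (γ t) - t) (Set.Icc c d) :=
    fun s hs => (key s hs).continuousWithinAt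
  have hderiv : ∀ x ∈ Set.Ico c d,
      HasDerivWithinAt (fun t => f (γ t) - t) 0 (Set.Ici x) x := by
    intro x hx
    have hmem : Set.Icc c d ∈ nhdsWithin x (Set.Ici x) := by
      have : Set.Ici x ∩ Set.Iio d ⊆ Set.Icc c d := fun y hy =>
        ⟨hx.1.trans hy.1, hy.2.le⟩
      exact Filter.mem_of_superset
        (inter_mem_nhdsWithin _ (Iio_mem_nhds hx.2)) this
    exact (key x ⟨hx.1, hx.2.le⟩).mono_of_mem_nhdsWithin hmem
  intro s hs
  have := constant_of_has_deriv_right_zero hcont hderiv s hs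
  simp only [hc] at this
  linarith
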